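/- Let X be a real Banach space with dual X*, K ⊆ X, and A : K → X*, a : K → X. Define G : K → set K by G(y) = {x ∈ K : ⟨A(y) − A(x), a(x)⟩ ≥ 0}. If K is convex and A is of type ql, then G is a KKM mapping: for any finite set y₁, …, yₙ ∈ K, the convex hull of {y₁, …, yₙ} is contained in ⋃ᵢ G(yᵢ). -/

import Mathlib

theorem stmt_3 {X : Type*} [NormedAddCommGroup X] [NormedSpace ℝ X] [CompleteSpace X]
    (K : Set X) (hK : Convex ℝ K)
    (A : X → StrongDual ℝ X) (a : X → X)
    (hql : ∀ x ∈ K, ∀ y ∈ K, ∀ z ∈ segment ℝ x y, z ∈ K → A z ∈ segment ℝ (A x) (A y))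
    (s : Finset X) (hs : (s : Set X) ⊆ K)
    (x : X) (hx : x ∈ convexHull ℝ (s : Set X)) :
    ∃ y ∈ s, x ∈ {u | u ∈ K ∧ (A y - A u) (a u) ≥ 0} := by
  have hxK : x ∈ K := convexHull_min hs hK hx
  have key : ∀ (t : Finset X), (t : Set X) ⊆ K →
      ∀ z ∈ convexHull ℝ (t : Set X), ∃ y ∈ t, (A z) (a x) ≤ (A y) (a x) := by
    classical
    intro t
    induction t using Finset.induction with
    | empty => intro _ z hz; simp at hz
    | @insert y t hni ih =>
      intro ht z hz
      rcases t.eq_empty_or_nonempty with rfl | htne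
      · simp only [Finset.insert_empty, Finset.coe_singleton, convexHull_singleton,
          Set.mem_singleton_iff] at hz
        exact ⟨y, Finset.mem_insert_self _ _, by rw [hz]⟩
      · have hyK : y ∈ K := ht (by simp)
        have htK : (t : Set X) ⊆ K := fun u hu => ht (by simp [hu])
        rw [Finset.coe_insert, convexHull_insert (Finset.coe_nonempty.mpr htne),
          mem_convexJoin] at hz
        obtain ⟨y0, hy0, w, hw, hzw⟩ := hz
        rw [Set.mem_singleton_iff] at hy0
        rw [hy0] at hzw
        have hwK : w ∈ K := convexHull_min htK hK hw
        have hzK : z ∈ K := hK.segment_subset hyK hwK hzw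
        have hA := hql y hyK w hwK z hzw hzK
        obtain ⟨α, β, hα, hβ, hαβ, hsum⟩ := hA
        obtain ⟨y', hy', hw'⟩ := ih htK w hw
        have hval : (A z) (a x) = α * (A y) (a x) + β * (A w) (a x) := by
          rw [← hsum]; simp
        by_cases h : (A y) (a x) ≤ (A y') (a x)
        · refine ⟨y', Finset.mem_insert_of_mem hy', ?_⟩
          calc (A z) (a x) = α * (A y) (a x) + β * (A w) (a x) := hval
            _ ≤ α * (A y') (a x) + β * (A y') (a x) :=
              add_le_add (mul_le_mul_of_nonneg_left h hα)
                (mul_le_mul_of_nonneg_left hw' hβ)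
            _ = (A y') (a x) := by rw [← add_mul, hαβ, one_mul]
        · refine ⟨y, Finset.mem_insert_self _ _, ?_⟩
          calc (A z) (a x) = α * (A y) (a x) + β * (A w) (a x) := hval
            _ ≤ α * (A y) (a x) + β * (A y) (a x) :=
              add_le_add le_rfl
                (mul_le_mul_of_nonneg_left (hw'.trans (le_of_not_ge h)) hβ)
            _ = (A y) (a x) := by rw [← add_mul, hαβ, one_mul]
  obtain ⟨y, hy, hle⟩ := key s hs x hx
  refine ⟨y, hy, hxK, ?_⟩
  simp only [ContinuousLinearMap.sub_apply]
  linarith
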